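/- Let m ≥ 2, n = m+1, h > 0, z_F > 0, M_α > 0, L ≥ 0, ε ≥ 0, J > 0, with m·h ≤ 1. Let D ∈ ℝⁿ have entries D_1,…,D_n with D_k > 0 for all k, and with D_{k+1/2} := (D_k + D_{k+1})/2 assume: (i) S_h := z_F·Σ_{k=1}^{m} h/D_{k+1/2} ≤ J; (ii) |D_i − D_{i+2}| ≤ 2hL for all 1 ≤ i < m−1; (iii) D_j ≤ ε for all m−1 ≤ j ≤ n; (iv) ε·M_α·J ≤ 1/2. Let G = (1/z_F)·S(D) − M_α·A(D) with S(D), A(D) defined below. Then for every v ∈ ℝ^m, vᵀGv ≥ (1/(2J) − M_α·L/2)·(h·Σ_{i=1}^{m} v_i²). -/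

import Mathlib

open Matrix Finset

/-- 1-based access to the entries of a finite vector, with value `0` at index `0`
and out of range. -/
def pad1 {n : ℕ} (v : Fin n → ℝ) : ℕ → ℝ :=
  fun k => if hk : k - 1 < n then (if k = 0 then 0 else v ⟨k - 1, hk⟩) else 0

/-- `D_{k+1/2} = (D_k + D_{k+1})/2` (1-based mathematical indexing). -/
noncomputable def Dhalf {n : ℕ} (D : Fin n → ℝ) (k : ℕ) : ℝ :=
  (pad1 D k + pad1 D (k + 1)) / 2

/-- `S_h = z_F Σ_{k=1}^m h / D_{k+1/2}`. -/
noncomputable def Sh (m : ℕ) (h zF : ℝ) (D : Fin (m + 1) → ℝ) : ℝ :=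
  zF * ∑ k ∈ Finset.Icc 1 m, h / Dhalf D k

/-- The symmetric tridiagonal stiffness matrix `S(D)` (1-based mathematical indexing). -/
noncomputable def matS (m : ℕ) (h : ℝ) (d : ℕ → ℝ) : Matrix (Fin m) (Fin m) ℝ :=
  Matrix.of fun i j =>
    if i = j then
      (if i.val + 1 = m then (d m + d (m + 1)) / (2 * h)
       else (d (i.val + 1) + 2 * d (i.val + 2) + d (i.val + 3)) / (2 * h))
    else if i.val + 1 = j.val then -((d (i.val + 2) + d (i.val + 3)) / (2 * h))
    else if j.val + 1 = i.val then -((d (j.val + 2) + d (j.val + 3)) / (2 * h))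
    else 0

/-- The tridiagonal matrix `A(D)` (1-based mathematical indexing). -/
noncomputable def matA (m : ℕ) (d : ℕ → ℝ) : Matrix (Fin m) (Fin m) ℝ :=
  Matrix.of fun i j =>
    if i = j then
      (if i.val + 1 = m then (d m + d (m + 1)) / 4
       else (d (i.val + 1) - d (i.val + 3)) / 4)
    else if i.val + 1 = j.val then (d (i.val + 2) + d (i.val + 3)) / 4
    else if j.val + 1 = i.val then -((d (j.val + 2) + d (j.val + 3)) / 4)
    else 0

/-! ### Auxiliary lemmas -/

/-- pad with zeros (0-based). -/
def pad0 {m : ℕ} (v : Fin m → ℝ) : ℕ → ℝ := fun j => if hj : j < m then v ⟨j, hj⟩ else 0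

lemma pad0_lt {m : ℕ} (v : Fin m → ℝ) {j : ℕ} (hj : j < m) : pad0 v j = v ⟨j, hj⟩ := dif_pos hj

lemma quadform_expand {m : ℕ} (T : Matrix (Fin m) (Fin m) ℝ) (v : Fin m → ℝ) :
    v ⬝ᵥ T.mulVec v = ∑ i : Fin m, ∑ j : Fin m, v i * T i j * v j := by
  simp [dotProduct, mulVec, Finset.mul_sum, mul_assoc]

lemma antisym_quadform {m : ℕ} (T : Matrix (Fin m) (Fin m) ℝ)
    (hT : ∀ i j : Fin m, i ≠ j → T i j = - T j i) (v : Fin m → ℝ) :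
    v ⬝ᵥ T.mulVec v = ∑ i : Fin m, T i i * v i ^ 2 := by
  have key := quadform_expand T v
  have key2 : v ⬝ᵥ T.mulVec v = ∑ i : Fin m, ∑ j : Fin m, v j * T j i * v i := by
    rw [key]; exact Finset.sum_comm
  have h2 : (∑ i : Fin m, ∑ j : Fin m, v i * T i j * v j)
      + ∑ i : Fin m, ∑ j : Fin m, v j * T j i * v i
      = ∑ i : Fin m, T i i * v i ^ 2 + ∑ i : Fin m, T i i * v i ^ 2 := by
    rw [← Finset.sum_add_distrib, ← Finset.sum_add_distrib]
    apply Finset.sum_congr rfl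
    intro i _
    rw [← Finset.sum_add_distrib]
    rw [Finset.sum_eq_single i]
    · ring
    · intro j _ hji
      rw [hT j i hji]; ring
    · simp
  linarith

lemma sum_fin_succ_ite {m : ℕ} (f : Fin m → ℝ) (i : Fin m) :
    ∑ j : Fin m, (if i.val + 1 = j.val then f j else 0)
      = if hs : i.val + 1 < m then f ⟨i.val + 1, hs⟩ else 0 := by
  split
  · next hs =>
    rw [Finset.sum_eq_single (⟨i.val + 1, hs⟩ : Fin m)]
    · simp
    · intro j _ hj
      rw [if_neg]
      intro hc
      exact hj (Fin.ext hc.symm)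
    · simp
  · next hs =>
    apply Finset.sum_eq_zero
    intro j _
    rw [if_neg]
    have := j.isLt
    omega

lemma sum_fin_pred_ite {m : ℕ} (f : Fin m → ℝ) (i : Fin m) :
    ∑ j : Fin m, (if j.val + 1 = i.val then f j else 0)
      = if hs : 0 < i.val then f ⟨i.val - 1, by omega⟩ else 0 := by
  split
  · next hs =>
    rw [Finset.sum_eq_single (⟨i.val - 1, by omega⟩ : Fin m)]
    · rw [if_pos (show (i.val - 1) + 1 = i.val by omega)]
    · intro j _ hj
      rw [if_neg]
      intro hc
      apply hj
      apply Fin.ext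
      show j.val = i.val - 1
      omega
    · simp
  · next hs =>
    apply Finset.sum_eq_zero
    intro j _
    rw [if_neg]
    omega

lemma tridiag_quadform {m : ℕ} (hm : 1 ≤ m) (T : Matrix (Fin m) (Fin m) ℝ) (a b : ℕ → ℝ)
    (v : Fin m → ℝ)
    (hdiag : ∀ i : Fin m, T i i = a i.val)
    (hsup : ∀ i j : Fin m, i.val + 1 = j.val → T i j = b j.val)
    (hsub : ∀ i j : Fin m, j.val + 1 = i.val → T i j = b i.val)
    (hzero : ∀ i j : Fin m, i ≠ j → i.val + 1 ≠ j.val → j.val + 1 ≠ i.val → T i j = 0) :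
    v ⬝ᵥ T.mulVec v = (∑ j ∈ range m, a j * (pad0 v j) ^ 2)
      + 2 * ∑ j ∈ range (m - 1), b (j + 1) * pad0 v j * pad0 v (j + 1) := by
  classical
  rw [quadform_expand]
  set V := pad0 v with hV
  have hVi : ∀ i : Fin m, v i = V i.val := by
    intro i; rw [hV, pad0_lt v i.isLt]
  have inner : ∀ i : Fin m, ∑ j : Fin m, v i * T i j * v j
      = V i.val * a i.val * V i.val
        + (if i.val + 1 < m then V i.val * b (i.val + 1) * V (i.val + 1) else 0)
        + (if 0 < i.val then V i.val * b i.val * V (i.val - 1) else 0) := by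
    intro i
    have split : ∀ j : Fin m, v i * T i j * v j
        = (if i = j then v i * T i j * v j else 0)
          + (if i.val + 1 = j.val then v i * T i j * v j else 0)
          + (if j.val + 1 = i.val then v i * T i j * v j else 0) := by
      intro j
      by_cases h1 : i = j
      · rw [if_pos h1, if_neg (by omega), if_neg (by omega)]; ring
      · rw [if_neg h1]
        by_cases h2 : i.val + 1 = j.val
        · rw [if_pos h2, if_neg (by omega)]; ring
        · rw [if_neg h2]
          by_cases h3 : j.val + 1 = i.val
          · rw [if_pos h3]; ring
          · rw [if_neg h3, hzero i j h1 h2 h3]; ring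
    rw [Finset.sum_congr rfl (fun j _ => split j)]
    rw [Finset.sum_add_distrib, Finset.sum_add_distrib]
    rw [Finset.sum_ite_eq, sum_fin_succ_ite, sum_fin_pred_ite]
    congr 1
    congr 1
    · rw [if_pos (Finset.mem_univ i), hdiag, hVi]
    · split
      · next hs =>
        rw [hsup i ⟨i.val + 1, hs⟩ rfl, hVi i, hVi ⟨i.val + 1, hs⟩]
      · rfl
    · split
      · next hs =>
        rw [hsub i ⟨i.val - 1, by omega⟩ (show (i.val - 1) + 1 = i.val by omega),
          hVi i, hVi ⟨i.val - 1, by omega⟩]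
      · rfl
  rw [Finset.sum_congr rfl (fun i _ => inner i)]
  rw [Fin.sum_univ_eq_sum_range (fun k => V k * a k * V k
    + (if k + 1 < m then V k * b (k + 1) * V (k + 1) else 0)
    + (if 0 < k then V k * b k * V (k - 1) else 0)) m]
  rw [Finset.sum_add_distrib, Finset.sum_add_distrib]
  obtain ⟨M, rfl⟩ : ∃ M, m = M + 1 := ⟨m - 1, by omega⟩
  have e1 : ∑ k ∈ range (M + 1), V k * a k * V k = ∑ j ∈ range (M + 1), a j * V j ^ 2 := by
    apply Finset.sum_congr rfl; intro k _; ring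
  have e2 : ∑ k ∈ range (M + 1), (if k + 1 < M + 1 then V k * b (k + 1) * V (k + 1) else 0)
      = ∑ k ∈ range M, V k * b (k + 1) * V (k + 1) := by
    rw [Finset.sum_range_succ, if_neg (by omega), add_zero]
    apply Finset.sum_congr rfl
    intro k hk
    rw [if_pos (by simp at hk; omega)]
  have e3 : ∑ k ∈ range (M + 1), (if 0 < k then V k * b k * V (k - 1) else 0)
      = ∑ k ∈ range M, V (k + 1) * b (k + 1) * V k := by
    rw [Finset.sum_range_succ']
    rw [if_neg (by omega), add_zero]
    apply Finset.sum_congr rfl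
    intro k _
    rw [if_pos (by omega)]
    simp
  rw [e1, e2, e3, Finset.mul_sum]
  simp only [Nat.add_sub_cancel]
  rw [add_assoc, ← Finset.sum_add_distrib]
  congr 1
  apply Finset.sum_congr rfl
  intro k _
  ring

set_option maxHeartbeats 1000000 in
theorem stmt_16 (m : ℕ) (hm : 2 ≤ m) (h zF Ma L ε J : ℝ)
    (hh : 0 < h) (hzF : 0 < zF) (hMa : 0 < Ma) (hL : 0 ≤ L) (hε : 0 ≤ ε) (hJ : 0 < J)
    (hmh : (m : ℝ) * h ≤ 1)
    (D : Fin (m + 1) → ℝ) (hD : ∀ k, 0 < D k)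
    (hSh : Sh m h zF D ≤ J)
    (hLip : ∀ i : ℕ, 1 ≤ i → i < m - 1 → |pad1 D i - pad1 D (i + 2)| ≤ 2 * h * L)
    (hEps : ∀ j : ℕ, m - 1 ≤ j → j ≤ m + 1 → pad1 D j ≤ ε)
    (hεJ : ε * Ma * J ≤ 1 / 2) :
    ∀ v : Fin m → ℝ,
      v ⬝ᵥ ((1 / zF) • matS m h (pad1 D) - Ma • matA m (pad1 D)).mulVec v ≥
        (1 / (2 * J) - Ma * L / 2) * (h * ∑ i : Fin m, (v i) ^ 2) := by
  intro v
  obtain ⟨M, rfl⟩ : ∃ M, m = M + 2 := ⟨m - 2, by omega⟩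
  set d : ℕ → ℝ := pad1 D with hdDef
  set V : ℕ → ℝ := pad0 v with hVdef
  set P : ℕ → ℝ := fun j => if j = 0 then 0 else V (j - 1) with hPdef
  set E : ℕ → ℝ := fun j => (d (j + 1) + d (j + 2)) / (2 * h) with hEdef
  -- positivity of d on the relevant range
  have hd : ∀ k : ℕ, 1 ≤ k → k ≤ M + 3 → 0 < d k := by
    intro k h1 h2
    have hk : k - 1 < M + 2 + 1 := by omega
    show 0 < pad1 D k
    unfold pad1
    rw [dif_pos hk, if_neg (by omega : ¬ k = 0)]
    exact hD _
  have hdEps : ∀ k : ℕ, M + 1 ≤ k → k ≤ M + 3 → d k ≤ ε := by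
    intro k h1 h2
    have := hEps k (by omega) (by omega)
    exact this
  have hEpos : ∀ j : ℕ, j < M + 2 → 0 < E j := by
    intro j hj
    rw [hEdef]
    have h1 := hd (j + 1) (by omega) (by omega)
    have h2 := hd (j + 2) (by omega) (by omega)
    positivity
  -- the S(D) quadratic form
  have hSq : v ⬝ᵥ (matS (M + 2) h d).mulVec v
      = ∑ j ∈ range (M + 2), E j * (V j - P j) ^ 2 := by
    have key := tridiag_quadform (m := M + 2) (by omega) (matS (M + 2) h d)
      (fun j => if j + 1 = M + 2 then (d (M + 2) + d (M + 3)) / (2 * h)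
        else (d (j + 1) + 2 * d (j + 2) + d (j + 3)) / (2 * h))
      (fun k => -(E k)) v ?_ ?_ ?_ ?_
    · rw [key, ← hVdef]
      set a : ℕ → ℝ := (fun j => if j + 1 = M + 2 then (d (M + 2) + d (M + 3)) / (2 * h)
        else (d (j + 1) + 2 * d (j + 2) + d (j + 3)) / (2 * h)) with hadef
      -- atoms
      have f1 : ∑ j ∈ range (M + 2), a j * V j ^ 2
          = (∑ j ∈ range (M + 1), E j * V j ^ 2)
            + (∑ j ∈ range (M + 1), E (j + 1) * V j ^ 2)
            + E (M + 1) * V (M + 1) ^ 2 := by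
        rw [Finset.sum_range_succ]
        have ha1 : a (M + 1) = E (M + 1) := by
          simp [hadef, hEdef]
        have ha2 : ∑ j ∈ range (M + 1), a j * V j ^ 2
            = ∑ j ∈ range (M + 1), (E j * V j ^ 2 + E (j + 1) * V j ^ 2) := by
          apply Finset.sum_congr rfl
          intro j hj
          simp only [Finset.mem_range] at hj
          rw [hadef]
          simp only [if_neg (by omega : ¬ j + 1 = M + 2)]
          rw [hEdef]
          ring
        rw [ha1, ha2, Finset.sum_add_distrib]
      have f2 : ∑ j ∈ range (M + 2), E j * V j ^ 2
          = (∑ j ∈ range (M + 1), E j * V j ^ 2) + E (M + 1) * V (M + 1) ^ 2 :=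
        Finset.sum_range_succ _ _
      have f3 : ∑ j ∈ range (M + 2), E j * V j ^ 2
          = (∑ j ∈ range (M + 1), E (j + 1) * V (j + 1) ^ 2) + E 0 * V 0 ^ 2 :=
        Finset.sum_range_succ' _ _
      have f4 : ∑ j ∈ range (M + 2), E j * (V j - P j) ^ 2
          = (∑ j ∈ range (M + 1), E (j + 1) * (V (j + 1) - V j) ^ 2) + E 0 * V 0 ^ 2 := by
        rw [Finset.sum_range_succ']
        have hP0 : P 0 = 0 := by simp [hPdef]
        have hPs : ∀ j : ℕ, P (j + 1) = V j := by intro j; simp [hPdef]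
        simp only [hPs, hP0, sub_zero]
      have f5 : ∑ j ∈ range (M + 1), E (j + 1) * (V (j + 1) - V j) ^ 2
          = (∑ j ∈ range (M + 1), E (j + 1) * V (j + 1) ^ 2)
            - 2 * (∑ j ∈ range (M + 1), E (j + 1) * V j * V (j + 1))
            + (∑ j ∈ range (M + 1), E (j + 1) * V j ^ 2) := by
        rw [Finset.mul_sum, ← Finset.sum_sub_distrib, ← Finset.sum_add_distrib]
        apply Finset.sum_congr rfl
        intro j _
        ring
      have f6 : 2 * ∑ j ∈ range (M + 2 - 1), -E (j + 1) * V j * V (j + 1)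
          = -(2 * ∑ j ∈ range (M + 1), E (j + 1) * V j * V (j + 1)) := by
        have hr : M + 2 - 1 = M + 1 := rfl
        rw [hr]
        have : ∀ j : ℕ, -E (j + 1) * V j * V (j + 1) = -(E (j + 1) * V j * V (j + 1)) := by
          intro j; ring
        rw [Finset.sum_congr rfl (fun j _ => this j), Finset.sum_neg_distrib]
        ring
      linarith [f1, f2, f3, f4, f5, f6]
    · intro i
      show matS (M + 2) h d i i = _
      unfold matS
      rw [Matrix.of_apply, if_pos rfl]
    · intro i j hij
      have hne : i ≠ j := by
        intro hc; rw [hc] at hij; omega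
      show matS (M + 2) h d i j = _
      unfold matS
      rw [Matrix.of_apply, if_neg hne, if_pos hij]
      simp only [hEdef]
      have h2 : j.val + 1 = i.val + 2 := by omega
      have h3 : j.val + 2 = i.val + 3 := by omega
      rw [h2, h3]
    · intro i j hij
      have hne : i ≠ j := by
        intro hc; rw [hc] at hij; omega
      show matS (M + 2) h d i j = _
      unfold matS
      rw [Matrix.of_apply, if_neg hne, if_neg (by omega), if_pos hij]
      simp only [hEdef]
      have h2 : i.val + 1 = j.val + 2 := by omega
      have h3 : i.val + 2 = j.val + 3 := by omega
      rw [h2, h3]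
    · intro i j h1 h2 h3
      show matS (M + 2) h d i j = 0
      unfold matS
      rw [Matrix.of_apply, if_neg h1, if_neg h2, if_neg h3]
  -- the A(D) quadratic form
  have hAq : v ⬝ᵥ (matA (M + 2) d).mulVec v
      = ∑ k ∈ range (M + 2), (if k + 1 = M + 2 then (d (M + 2) + d (M + 3)) / 4
          else (d (k + 1) - d (k + 3)) / 4) * V k ^ 2 := by
    have hanti : ∀ i j : Fin (M + 2), i ≠ j → matA (M + 2) d i j = - matA (M + 2) d j i := by
      intro i j hij
      unfold matA
      rw [Matrix.of_apply, Matrix.of_apply, if_neg hij, if_neg (Ne.symm hij)]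
      split_ifs <;> first | (exfalso; omega) | ring
    rw [antisym_quadform _ hanti v]
    have hterm : ∀ i : Fin (M + 2), matA (M + 2) d i i * v i ^ 2
        = (fun k : ℕ => (if k + 1 = M + 2 then (d (M + 2) + d (M + 3)) / 4
            else (d (k + 1) - d (k + 3)) / 4) * V k ^ 2) i.val := by
      intro i
      have h1 : matA (M + 2) d i i = if i.val + 1 = M + 2 then (d (M + 2) + d (M + 3)) / 4
          else (d (i.val + 1) - d (i.val + 3)) / 4 := by
        unfold matA; rw [Matrix.of_apply, if_pos rfl]
      have h2 : v i = V i.val := by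
        rw [hVdef, pad0_lt v i.isLt]
      rw [h1, h2]
    rw [Finset.sum_congr rfl (fun i _ => hterm i)]
    exact Fin.sum_univ_eq_sum_range (fun k : ℕ => (if k + 1 = M + 2 then (d (M + 2) + d (M + 3)) / 4
      else (d (k + 1) - d (k + 3)) / 4) * V k ^ 2) (M + 2)
  -- bound for the A(D) part
  have hAbound : v ⬝ᵥ (matA (M + 2) d).mulVec v
      ≤ (h * L / 2) * (∑ k ∈ range (M + 2), V k ^ 2)
        + ε / 4 * V M ^ 2 + ε / 2 * V (M + 1) ^ 2 := by
    rw [hAq, Finset.sum_range_succ, Finset.sum_range_succ]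
    have t1 : ∑ k ∈ range M, (if k + 1 = M + 2 then (d (M + 2) + d (M + 3)) / 4
          else (d (k + 1) - d (k + 3)) / 4) * V k ^ 2
        ≤ ∑ k ∈ range M, (h * L / 2) * V k ^ 2 := by
      apply Finset.sum_le_sum
      intro k hk
      simp only [Finset.mem_range] at hk
      rw [if_neg (by omega : ¬ k + 1 = M + 2)]
      have hb := hLip (k + 1) (by omega) (by omega)
      have hb2 : d (k + 1) - d (k + 3) ≤ 2 * h * L := (abs_le.mp hb).2
      nlinarith [sq_nonneg (V k)]
    have t2 : ∑ k ∈ range M, (h * L / 2) * V k ^ 2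
        ≤ (h * L / 2) * ∑ k ∈ range (M + 2), V k ^ 2 := by
      rw [← Finset.mul_sum]
      apply mul_le_mul_of_nonneg_left _ (by positivity)
      apply Finset.sum_le_sum_of_subset_of_nonneg
      · exact Finset.range_subset_range.mpr (by omega)
      · intro k _ _; positivity
    have t3 : (if M + 1 = M + 2 then (d (M + 2) + d (M + 3)) / 4
          else (d (M + 1) - d (M + 3)) / 4) * V M ^ 2 ≤ ε / 4 * V M ^ 2 := by
      rw [if_neg (by omega : ¬ M + 1 = M + 2)]
      have e1 : d (M + 1) ≤ ε := hdEps (M + 1) (by omega) (by omega)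
      have e2 : 0 < d (M + 3) := hd (M + 3) (by omega) (by omega)
      nlinarith [sq_nonneg (V M)]
    have t4 : (if M + 1 + 1 = M + 2 then (d (M + 2) + d (M + 3)) / 4
          else (d (M + 1 + 1) - d (M + 1 + 3)) / 4) * V (M + 1) ^ 2
        ≤ ε / 2 * V (M + 1) ^ 2 := by
      rw [if_pos rfl]
      have e1 : d (M + 2) ≤ ε := hdEps (M + 2) (by omega) (by omega)
      have e2 : d (M + 3) ≤ ε := hdEps (M + 3) (by omega) (by omega)
      nlinarith [sq_nonneg (V (M + 1))]
    linarith
  -- the quantity Q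
  set Q := ∑ j ∈ range (M + 2), E j * (V j - P j) ^ 2 with hQdef
  have hQ0 : 0 ≤ Q := by
    apply Finset.sum_nonneg
    intro j hj
    have := hEpos j (Finset.mem_range.mp hj)
    positivity
  -- sum of inverses bound
  have hSumInv : ∑ j ∈ range (M + 2), 1 / E j ≤ J / zF := by
    have e1 : ∀ j ∈ range (M + 2), 1 / E j = h / Dhalf D (j + 1) := by
      intro j hj
      have hjm := Finset.mem_range.mp hj
      have h1 := hd (j + 1) (by omega) (by omega)
      have h2 := hd (j + 2) (by omega) (by omega)
      have hDh : Dhalf D (j + 1) = (d (j + 1) + d (j + 2)) / 2 := rfl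
      have hE' : E j = (d (j + 1) + d (j + 2)) / (2 * h) := rfl
      rw [hDh, hE']
      have hx : (0:ℝ) < d (j + 1) + d (j + 2) := by linarith
      rw [div_div_eq_mul_div, div_div_eq_mul_div]
      ring
    have e2 : Sh (M + 2) h zF D = zF * ∑ j ∈ range (M + 2), h / Dhalf D (j + 1) := by
      unfold Sh
      congr 1
      rw [← Finset.Ico_add_one_right_eq_Icc, Finset.sum_Ico_eq_sum_range]
      apply Finset.sum_congr (by norm_num)
      intro j _
      rw [Nat.add_comm 1 j]
    rw [Finset.sum_congr rfl e1]
    rw [le_div_iff₀ hzF]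
    rw [e2] at hSh
    linarith [hSh]
  -- Cauchy-Schwarz bound
  have hCauchy : ∀ k : ℕ, k < M + 2 → V k ^ 2 ≤ (J / zF) * Q := by
    intro k hk
    have hPs : ∀ j : ℕ, P (j + 1) = V j := by intro j; simp [hPdef]
    have hP0 : P 0 = 0 := by simp [hPdef]
    have htel : V k = ∑ i ∈ range (k + 1), (V i - P i) := by
      calc V k = P (k + 1) - P 0 := by rw [hPs, hP0, sub_zero]
        _ = ∑ i ∈ range (k + 1), (P (i + 1) - P i) := (Finset.sum_range_sub P (k + 1)).symm
        _ = ∑ i ∈ range (k + 1), (V i - P i) :=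
            Finset.sum_congr rfl (fun i _ => by rw [hPs])
    have hCS := Finset.sum_mul_sq_le_sq_mul_sq (range (k + 1))
        (fun i => Real.sqrt (1 / E i)) (fun i => Real.sqrt (E i) * (V i - P i))
    have hEr : ∀ i ∈ range (k + 1), 0 < E i := by
      intro i hi
      have := Finset.mem_range.mp hi
      exact hEpos i (by omega)
    have hfg : ∑ i ∈ range (k + 1),
        Real.sqrt (1 / E i) * (Real.sqrt (E i) * (V i - P i)) = ∑ i ∈ range (k + 1), (V i - P i) := by
      apply Finset.sum_congr rfl
      intro i hi
      have hEi := hEr i hi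
      rw [← mul_assoc, ← Real.sqrt_mul (by positivity), one_div_mul_cancel (ne_of_gt hEi),
        Real.sqrt_one, one_mul]
    have hf2 : ∑ i ∈ range (k + 1), (Real.sqrt (1 / E i)) ^ 2
        = ∑ i ∈ range (k + 1), 1 / E i := by
      apply Finset.sum_congr rfl
      intro i hi
      have := hEr i hi
      exact Real.sq_sqrt (by positivity)
    have hg2 : ∑ i ∈ range (k + 1), (Real.sqrt (E i) * (V i - P i)) ^ 2
        = ∑ i ∈ range (k + 1), E i * (V i - P i) ^ 2 := by
      apply Finset.sum_congr rfl
      intro i hi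
      have hEi := hEr i hi
      rw [mul_pow, Real.sq_sqrt hEi.le]
    rw [hfg, hf2, hg2, ← htel] at hCS
    have hA1 : ∑ i ∈ range (k + 1), 1 / E i ≤ J / zF := by
      refine le_trans (Finset.sum_le_sum_of_subset_of_nonneg
        (Finset.range_subset_range.mpr (by omega)) ?_) hSumInv
      intro j hj _
      have := hEpos j (Finset.mem_range.mp hj)
      positivity
    have hB1 : ∑ i ∈ range (k + 1), E i * (V i - P i) ^ 2 ≤ Q := by
      apply Finset.sum_le_sum_of_subset_of_nonneg (Finset.range_subset_range.mpr (by omega))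
      intro j hj _
      have := hEpos j (Finset.mem_range.mp hj)
      positivity
    have hB0 : 0 ≤ ∑ i ∈ range (k + 1), E i * (V i - P i) ^ 2 := by
      apply Finset.sum_nonneg
      intro i hi
      have := hEr i hi
      positivity
    calc V k ^ 2 ≤ (∑ i ∈ range (k + 1), 1 / E i) * ∑ i ∈ range (k + 1), E i * (V i - P i) ^ 2 := hCS
      _ ≤ (J / zF) * Q := mul_le_mul hA1 hB1 hB0 (by positivity)
  -- the sum of squares
  have hSsq : ∑ i : Fin (M + 2), v i ^ 2 = ∑ k ∈ range (M + 2), V k ^ 2 := by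
    have hterm : ∀ i : Fin (M + 2), v i ^ 2 = (fun k : ℕ => V k ^ 2) i.val := by
      intro i
      have : v i = V i.val := by rw [hVdef, pad0_lt v i.isLt]
      rw [this]
    rw [Finset.sum_congr rfl (fun i _ => hterm i)]
    exact Fin.sum_univ_eq_sum_range (fun k : ℕ => V k ^ 2) (M + 2)
  clear_value d V P E Q
  have hSV : h * ∑ k ∈ range (M + 2), V k ^ 2 ≤ (J / zF) * Q := by
    have hb : ∑ k ∈ range (M + 2), V k ^ 2 ≤ ((M + 2 : ℕ) : ℝ) * ((J / zF) * Q) := by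
      calc ∑ k ∈ range (M + 2), V k ^ 2 ≤ ∑ _k ∈ range (M + 2), (J / zF) * Q :=
            Finset.sum_le_sum (fun k hk => hCauchy k (Finset.mem_range.mp hk))
        _ = ((M + 2 : ℕ) : ℝ) * ((J / zF) * Q) := by
            rw [Finset.sum_const, Finset.card_range, nsmul_eq_mul]
    have hJQ : (0:ℝ) ≤ J / zF * Q := by positivity
    calc h * ∑ k ∈ range (M + 2), V k ^ 2 ≤ h * (((M + 2 : ℕ) : ℝ) * ((J / zF) * Q)) :=
          mul_le_mul_of_nonneg_left hb hh.le
      _ = (((M + 2 : ℕ) : ℝ) * h) * ((J / zF) * Q) := by ring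
      _ ≤ 1 * ((J / zF) * Q) := mul_le_mul_of_nonneg_right hmh hJQ
      _ = (J / zF) * Q := one_mul _
  -- assembling everything
  have hLHS : v ⬝ᵥ ((1 / zF) • matS (M + 2) h d - Ma • matA (M + 2) d).mulVec v
      = (1 / zF) * (v ⬝ᵥ (matS (M + 2) h d).mulVec v)
        - Ma * (v ⬝ᵥ (matA (M + 2) d).mulVec v) := by
    simp [Matrix.sub_mulVec, dotProduct_sub, Matrix.smul_mulVec,
      dotProduct_smul, smul_eq_mul]
  rw [ge_iff_le, hSsq, hLHS, hSq]
  set SV := ∑ k ∈ range (M + 2), V k ^ 2 with hSVdef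
  set QA := v ⬝ᵥ (matA (M + 2) d).mulVec v with hQAdef
  have hMaA := mul_le_mul_of_nonneg_left hAbound hMa.le
  have e0 : Ma * ((h * L / 2) * SV + ε / 4 * V M ^ 2 + ε / 2 * V (M + 1) ^ 2)
      = (Ma * L / 2) * (h * SV) + Ma * (ε / 4) * V M ^ 2 + Ma * (ε / 2) * V (M + 1) ^ 2 := by
    ring
  have hC1 := hCauchy M (by omega)
  have hC2 := hCauchy (M + 1) (by omega)
  have g1 : Ma * (ε / 4) * V M ^ 2 ≤ Ma * (ε / 4) * ((J / zF) * Q) :=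
    mul_le_mul_of_nonneg_left hC1 (by positivity)
  have g2 : Ma * (ε / 2) * V (M + 1) ^ 2 ≤ Ma * (ε / 2) * ((J / zF) * Q) :=
    mul_le_mul_of_nonneg_left hC2 (by positivity)
  have g3 : (ε * Ma * J) * (Q / zF) ≤ (1 / 2) * (Q / zF) :=
    mul_le_mul_of_nonneg_right hεJ (by positivity)
  have g4 : (1 / (2 * J)) * (h * SV) ≤ (1 / (2 * J)) * ((J / zF) * Q) :=
    mul_le_mul_of_nonneg_left hSV (by positivity)
  have g5 : (1 / (2 * J)) * ((J / zF) * Q) = (1 / 2) * (Q / zF) := by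
    field_simp
  have g6 : Ma * (ε / 4) * ((J / zF) * Q) + Ma * (ε / 2) * ((J / zF) * Q)
      = (3 / 4) * ((ε * Ma * J) * (Q / zF)) := by
    ring
  have e2 : (1 / zF) * Q = Q / zF := by ring
  have e3 : (1 / (2 * J) - Ma * L / 2) * (h * SV)
      = (1 / (2 * J)) * (h * SV) - (Ma * L / 2) * (h * SV) := by ring
  have hQz : 0 ≤ Q / zF := by positivity
  linarith
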